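/- Let r ∈ ℝ and suppose f₁, f₂ : ℝ × ℝ → ℝ (arguments (t,p)) are C² functions satisfying: (a) p²∂_{pp}f₁ + 2∂_t f₁ = 0; (b) p²∂_{pp}f₂ + 2∂_t f₂ − 2r f₂ = 0; (c) p²∂_p f₁ + p∂_p f₂ − f₂ = 0. Then there exist constants d₁, d₂, d₃ ∈ ℝ (with d₂/r interpreted appropriately when r ≠ 0) such that for p > 0: f₁(t,p) = d₁ exp(−r(r−1)t/2) p^r − d₂/r and f₂(t,p) = −d₁ exp(−r(r−1)t/2) p^{r+1} + d₃ e^{rt} p. Conversely, for any constants d₁, d₂, d₃, these functions satisfy (a), (b), (c). -/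

import Mathlib

open Real Set

namespace Stmt7

/-- Partial derivative in `t` of a function of `(t,p)`. -/
noncomputable def dt (F : ℝ → ℝ → ℝ) : ℝ → ℝ → ℝ := fun t p => deriv (fun s => F s p) t

/-- Partial derivative in `p` of a function of `(t,p)`. -/
noncomputable def dp (F : ℝ → ℝ → ℝ) : ℝ → ℝ → ℝ := fun t p => deriv (fun s => F t s) p

private abbrev UU : Set (ℝ × ℝ) := univ ×ˢ Ioi 0

private lemma hUopen : IsOpen UU := isOpen_univ.prod isOpen_Ioi

private lemma memU {t p : ℝ} (hp : 0 < p) : (t, p) ∈ UU := ⟨trivial, hp⟩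

section
variable {F : ℝ → ℝ → ℝ} (hF : ContDiffOn ℝ 2 (fun z : ℝ × ℝ => F z.1 z.2) UU)
include hF

private lemma cdAt {t p : ℝ} (hp : 0 < p) :
    ContDiffAt ℝ 2 (fun z : ℝ × ℝ => F z.1 z.2) (t, p) :=
  hF.contDiffAt (hUopen.mem_nhds (memU hp))

/-- (i): the `t`-partial as a HasDerivAt. -/
private lemma hdT {t p : ℝ} (hp : 0 < p) :
    HasDerivAt (fun s => F s p) (dt F t p) t := by
  have hd := ((cdAt (t := t) hF hp).differentiableAt (by norm_num)).hasFDerivAt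
  have hc : HasDerivAt (fun s : ℝ => (s, p)) ((1 : ℝ), (0 : ℝ)) t :=
    (hasDerivAt_id t).prodMk (hasDerivAt_const t p)
  have h := hd.comp_hasDerivAt t hc
  have e : dt F t p = fderiv ℝ (fun z : ℝ × ℝ => F z.1 z.2) (t, p) (1, 0) := h.deriv
  rw [e]; exact h

/-- (ii): the `p`-partial as a HasDerivAt. -/
private lemma hdP {t p : ℝ} (hp : 0 < p) :
    HasDerivAt (fun s => F t s) (dp F t p) p := by
  have hd := ((cdAt (t := t) hF hp).differentiableAt (by norm_num)).hasFDerivAt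
  have hc : HasDerivAt (fun s : ℝ => (t, s)) ((0 : ℝ), (1 : ℝ)) p :=
    (hasDerivAt_const p t).prodMk (hasDerivAt_id p)
  have h := hd.comp_hasDerivAt p hc
  have e : dp F t p = fderiv ℝ (fun z : ℝ × ℝ => F z.1 z.2) (t, p) (0, 1) := h.deriv
  rw [e]; exact h

private lemma dt_eq {t p : ℝ} (hp : 0 < p) :
    dt F t p = fderiv ℝ (fun z : ℝ × ℝ => F z.1 z.2) (t, p) (1, 0) := by
  have hd := ((cdAt (t := t) hF hp).differentiableAt (by norm_num)).hasFDerivAt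
  have hc : HasDerivAt (fun s : ℝ => (s, p)) ((1 : ℝ), (0 : ℝ)) t :=
    (hasDerivAt_id t).prodMk (hasDerivAt_const t p)
  exact (hd.comp_hasDerivAt t hc).deriv

private lemma dp_eq {t p : ℝ} (hp : 0 < p) :
    dp F t p = fderiv ℝ (fun z : ℝ × ℝ => F z.1 z.2) (t, p) (0, 1) := by
  have hd := ((cdAt (t := t) hF hp).differentiableAt (by norm_num)).hasFDerivAt
  have hc : HasDerivAt (fun s : ℝ => (t, s)) ((0 : ℝ), (1 : ℝ)) p :=
    (hasDerivAt_const p t).prodMk (hasDerivAt_id p)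
  exact (hd.comp_hasDerivAt p hc).deriv

private lemma hasFD2 {t p : ℝ} (hp : 0 < p) :
    HasFDerivAt (fderiv ℝ (fun z : ℝ × ℝ => F z.1 z.2))
      (fderiv ℝ (fderiv ℝ (fun z : ℝ × ℝ => F z.1 z.2)) (t, p)) (t, p) := by
  have h1 : ContDiffAt ℝ 1 (fderiv ℝ (fun z : ℝ × ℝ => F z.1 z.2)) (t, p) :=
    (cdAt (t := t) hF hp).fderiv_right (by norm_num)
  exact (h1.differentiableAt (by norm_num)).hasFDerivAt

private lemma hasDerivFD_p {t p : ℝ} (hp : 0 < p) (w : ℝ × ℝ) :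
    HasDerivAt (fun s => fderiv ℝ (fun z : ℝ × ℝ => F z.1 z.2) (t, s) w)
      (fderiv ℝ (fderiv ℝ (fun z : ℝ × ℝ => F z.1 z.2)) (t, p) (0, 1) w) p := by
  have hc : HasDerivAt (fun s : ℝ => (t, s)) ((0 : ℝ), (1 : ℝ)) p :=
    (hasDerivAt_const p t).prodMk (hasDerivAt_id p)
  have := (((ContinuousLinearMap.apply ℝ ℝ w).hasFDerivAt.comp (t, p)
    (hasFD2 (t := t) hF hp)).comp_hasDerivAt p hc)
  exact this

private lemma hasDerivFD_t {t p : ℝ} (hp : 0 < p) (w : ℝ × ℝ) :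
    HasDerivAt (fun s => fderiv ℝ (fun z : ℝ × ℝ => F z.1 z.2) (s, p) w)
      (fderiv ℝ (fderiv ℝ (fun z : ℝ × ℝ => F z.1 z.2)) (t, p) (1, 0) w) t := by
  have hc : HasDerivAt (fun s : ℝ => (s, p)) ((1 : ℝ), (0 : ℝ)) t :=
    (hasDerivAt_id t).prodMk (hasDerivAt_const t p)
  have := (((ContinuousLinearMap.apply ℝ ℝ w).hasFDerivAt.comp (t, p)
    (hasFD2 (t := t) hF hp)).comp_hasDerivAt t hc)
  exact this

/-- (iii) -/
private lemma hdPP {t p : ℝ} (hp : 0 < p) :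
    HasDerivAt (fun s => dp F t s) (dp (dp F) t p) p := by
  have hev : (fun s => dp F t s) =ᶠ[nhds p] 
      (fun s => fderiv ℝ (fun z : ℝ × ℝ => F z.1 z.2) (t, s) (0, 1)) := by
    filter_upwards [isOpen_Ioi.mem_nhds hp] with s hs
    exact dp_eq hF hs
  have h := (hasDerivFD_p (t := t) hF hp (0, 1)).congr_of_eventuallyEq hev
  have e : dp (dp F) t p = fderiv ℝ (fderiv ℝ (fun z : ℝ × ℝ => F z.1 z.2)) (t, p) (0, 1) (0, 1) :=
    h.deriv
  rw [e]; exact h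

/-- (iv) -/
private lemma hdTP {t p : ℝ} (hp : 0 < p) :
    HasDerivAt (fun s => dp F s p) (dt (dp F) t p) t := by
  have hev : (fun s => dp F s p) =
      (fun s => fderiv ℝ (fun z : ℝ × ℝ => F z.1 z.2) (s, p) (0, 1)) := by
    funext s; exact dp_eq hF hp
  have h := hasDerivFD_t (t := t) hF hp (0, 1)
  rw [← hev] at h
  have e : dt (dp F) t p = fderiv ℝ (fderiv ℝ (fun z : ℝ × ℝ => F z.1 z.2)) (t, p) (1, 0) (0, 1) :=
    h.deriv
  rw [e]; exact h

/-- (v) -/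
private lemma hdPT {t p : ℝ} (hp : 0 < p) :
    HasDerivAt (fun s => dt F t s) (dp (dt F) t p) p := by
  have hev : (fun s => dt F t s) =ᶠ[nhds p]
      (fun s => fderiv ℝ (fun z : ℝ × ℝ => F z.1 z.2) (t, s) (1, 0)) := by
    filter_upwards [isOpen_Ioi.mem_nhds hp] with s hs
    exact dt_eq hF hs
  have h := (hasDerivFD_p (t := t) hF hp (1, 0)).congr_of_eventuallyEq hev
  have e : dp (dt F) t p = fderiv ℝ (fderiv ℝ (fun z : ℝ × ℝ => F z.1 z.2)) (t, p) (0, 1) (1, 0) :=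
    h.deriv
  rw [e]; exact h

/-- (vi) Clairaut. -/
private lemma clairaut {t p : ℝ} (hp : 0 < p) :
    dp (dt F) t p = dt (dp F) t p := by
  have hev1 : (fun s => dt F t s) =ᶠ[nhds p]
      (fun s => fderiv ℝ (fun z : ℝ × ℝ => F z.1 z.2) (t, s) (1, 0)) := by
    filter_upwards [isOpen_Ioi.mem_nhds hp] with s hs
    exact dt_eq hF hs
  have h1 : dp (dt F) t p =
      fderiv ℝ (fderiv ℝ (fun z : ℝ × ℝ => F z.1 z.2)) (t, p) (0, 1) (1, 0) :=
    ((hasDerivFD_p (t := t) hF hp (1, 0)).congr_of_eventuallyEq hev1).deriv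
  have hev2 : (fun s => dp F s p) =
      (fun s => fderiv ℝ (fun z : ℝ × ℝ => F z.1 z.2) (s, p) (0, 1)) := by
    funext s; exact dp_eq hF hp
  have h' := hasDerivFD_t (t := t) hF hp (0, 1)
  rw [← hev2] at h'
  have h2 : dt (dp F) t p =
      fderiv ℝ (fderiv ℝ (fun z : ℝ × ℝ => F z.1 z.2)) (t, p) (1, 0) (0, 1) := h'.deriv
  have hsym : fderiv ℝ (fderiv ℝ (fun z : ℝ × ℝ => F z.1 z.2)) (t, p) ((0:ℝ), (1:ℝ)) ((1:ℝ), (0:ℝ)) =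
      fderiv ℝ (fderiv ℝ (fun z : ℝ × ℝ => F z.1 z.2)) (t, p) ((1:ℝ), (0:ℝ)) ((0:ℝ), (1:ℝ)) := by
    refine second_derivative_symmetric_of_eventually (f := fun z : ℝ × ℝ => F z.1 z.2) ?_
      (hasFD2 (t := t) hF hp) _ _
    filter_upwards [hUopen.mem_nhds (memU (t := t) hp)] with y hy
    exact ((hF.contDiffAt (hUopen.mem_nhds hy)).differentiableAt (by norm_num)).hasFDerivAt
  rw [h1, h2, hsym]

end

private lemma deriv_eq_zero_of_eventually_zero {φ : ℝ → ℝ} {d p : ℝ} (hφ : HasDerivAt φ d p)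
    (h0 : ∀ᶠ s in nhds p, φ s = 0) : d = 0 :=
  (hφ.congr_of_eventuallyEq (h0.mono fun s hs => hs.symm)).unique (hasDerivAt_const p 0)

private lemma const_of_hasDerivAt_zero_Ioi {f : ℝ → ℝ}
    (hf : ∀ x ∈ Ioi (0:ℝ), HasDerivAt f 0 x) {p : ℝ} (hp : 0 < p) : f p = f 1 := by
  refine (convex_Ioi (0:ℝ)).is_const_of_fderivWithin_eq_zero
    (fun x hx => (hf x hx).differentiableAt.differentiableWithinAt) (fun x hx => ?_) hp
    (mem_Ioi.2 one_pos)
  rw [fderivWithin_of_isOpen isOpen_Ioi hx, (hf x hx).hasFDerivAt.fderiv]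
  ext y; simp

private lemma expODE {c : ℝ → ℝ} {k : ℝ} (hc : ∀ t, HasDerivAt c (k * c t) t) (t : ℝ) :
    c t = c 0 * Real.exp (k * t) := by
  have hg : ∀ s, HasDerivAt (fun u => c u * Real.exp (-k * u)) 0 s := by
    intro s
    have h0 : HasDerivAt (fun u : ℝ => -k * u) (-k) s := by
      simpa using (hasDerivAt_id s).const_mul (-k)
    have h1 := (hc s).mul h0.exp
    exact h1.congr_deriv (by ring)
  have hconst := is_const_of_deriv_eq_zero (𝕜 := ℝ)
    (f := fun u => c u * Real.exp (-k * u))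
    (fun x => (hg x).differentiableAt) (fun x => (hg x).deriv) t 0
  simp only [mul_zero, neg_zero, Real.exp_zero, mul_one] at hconst
  have := congrArg (fun y => y * Real.exp (k * t)) hconst
  simpa [mul_assoc, ← Real.exp_add] using this

private lemma two_rpow_ne_one {r : ℝ} (hr : r ≠ 0) : (2:ℝ) ^ r ≠ 1 := by
  intro h
  have hl := congrArg Real.log h
  rw [Real.log_rpow two_pos, Real.log_one] at hl
  rcases mul_eq_zero.1 hl with h' | h'
  · exact hr h'
  · rcases Real.log_eq_zero.1 h' with h'' | h'' | h'' <;> norm_num at h''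

private lemma hasDerivAt_rpow' {x : ℝ} (hx : 0 < x) (e : ℝ) :
    HasDerivAt (fun y : ℝ => y ^ e) (e * x ^ (e - 1)) x :=
  Real.hasDerivAt_rpow_const (Or.inl hx.ne')

section Converse

variable {r : ℝ} (d₁ d₂ d₃ : ℝ)

private lemma hE (r t : ℝ) : HasDerivAt (fun s => Real.exp (-(r*(r-1)*s)/2))
    (-(r*(r-1))/2 * Real.exp (-(r*(r-1)*t)/2)) t := by
  have h0 : HasDerivAt (fun s : ℝ => -(r*(r-1)*s)/2) (-(r*(r-1))/2) t := by
    simpa [mul_comm, mul_assoc, neg_div] using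
      (((hasDerivAt_id t).const_mul (r*(r-1))).neg.div_const 2)
  simpa [mul_comm] using h0.exp

private lemma hER (r t : ℝ) : HasDerivAt (fun s => Real.exp (r*s))
    (r * Real.exp (r*t)) t := by
  have h0 : HasDerivAt (fun s : ℝ => r*s) r t := by
    simpa using (hasDerivAt_id t).const_mul r
  simpa [mul_comm] using h0.exp

private lemma conv_dp1 (t : ℝ) {p : ℝ} (hp : 0 < p) :
    dp (fun t p => d₁ * Real.exp (-(r * (r - 1) * t) / 2) * p ^ r - d₂ / r) t p
      = d₁ * Real.exp (-(r * (r - 1) * t) / 2) * (r * p ^ (r-1)) := by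
  exact (((hasDerivAt_rpow' hp r).const_mul
    (d₁ * Real.exp (-(r * (r - 1) * t) / 2))).sub_const (d₂ / r)).deriv

private lemma conv_dpdp1 (t : ℝ) {p : ℝ} (hp : 0 < p) :
    dp (dp (fun t p => d₁ * Real.exp (-(r * (r - 1) * t) / 2) * p ^ r - d₂ / r)) t p
      = d₁ * Real.exp (-(r * (r - 1) * t) / 2) * r * ((r-1) * p ^ (r-1-1)) := by
  have h : HasDerivAt (fun s : ℝ => d₁ * Real.exp (-(r * (r - 1) * t) / 2) * r * s ^ (r-1))
      (d₁ * Real.exp (-(r * (r - 1) * t) / 2) * r * ((r-1) * p ^ (r-1-1))) p :=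
    (hasDerivAt_rpow' hp (r-1)).const_mul _
  have hev : (fun s => dp (fun t p => d₁ * Real.exp (-(r * (r - 1) * t) / 2) * p ^ r - d₂ / r) t s)
      =ᶠ[nhds p] (fun s : ℝ => d₁ * Real.exp (-(r * (r - 1) * t) / 2) * r * s ^ (r-1)) := by
    filter_upwards [isOpen_Ioi.mem_nhds hp] with s hs
    rw [conv_dp1 d₁ d₂ t hs]; ring
  exact (h.congr_of_eventuallyEq hev).deriv

private lemma conv_dt1 (t p : ℝ) :
    dt (fun t p => d₁ * Real.exp (-(r * (r - 1) * t) / 2) * p ^ r - d₂ / r) t p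
      = d₁ * (-(r*(r-1))/2 * Real.exp (-(r * (r - 1) * t) / 2)) * p ^ r :=
  ((((hE r t).const_mul d₁).mul_const (p ^ r)).sub_const (d₂ / r)).deriv

private lemma conv_dp2 (t : ℝ) {p : ℝ} (hp : 0 < p) :
    dp (fun t p => -d₁ * Real.exp (-(r * (r - 1) * t) / 2) * p ^ (r+1)
        + d₃ * Real.exp (r * t) * p) t p
      = -d₁ * Real.exp (-(r * (r - 1) * t) / 2) * ((r+1) * p ^ (r+1-1))
        + d₃ * Real.exp (r * t) := by
  have h := ((hasDerivAt_rpow' hp (r+1)).const_mul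
      (-d₁ * Real.exp (-(r * (r - 1) * t) / 2))).add
    ((hasDerivAt_id p).const_mul (d₃ * Real.exp (r * t)))
  have h' := h.deriv; rw [mul_one] at h'; exact h'

private lemma conv_dpdp2 (t : ℝ) {p : ℝ} (hp : 0 < p) :
    dp (dp (fun t p => -d₁ * Real.exp (-(r * (r - 1) * t) / 2) * p ^ (r+1)
        + d₃ * Real.exp (r * t) * p)) t p
      = -d₁ * Real.exp (-(r * (r - 1) * t) / 2) * (r+1) * (r * p ^ (r+1-1-1)) := by
  have h : HasDerivAt (fun s : ℝ => -d₁ * Real.exp (-(r * (r - 1) * t) / 2) * (r+1) * s ^ (r+1-1)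
        + d₃ * Real.exp (r * t))
      (-d₁ * Real.exp (-(r * (r - 1) * t) / 2) * (r+1) * ((r+1-1) * p ^ (r+1-1-1))) p :=
    ((hasDerivAt_rpow' hp (r+1-1)).const_mul _).add_const _
  have hev : (fun s => dp (fun t p => -d₁ * Real.exp (-(r * (r - 1) * t) / 2) * p ^ (r+1)
        + d₃ * Real.exp (r * t) * p) t s)
      =ᶠ[nhds p] (fun s : ℝ => -d₁ * Real.exp (-(r * (r - 1) * t) / 2) * (r+1) * s ^ (r+1-1)
        + d₃ * Real.exp (r * t)) := by
    filter_upwards [isOpen_Ioi.mem_nhds hp] with s hs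
    rw [conv_dp2 d₁ d₃ t hs]; ring
  have h2 : dp (dp (fun t p => -d₁ * Real.exp (-(r * (r - 1) * t) / 2) * p ^ (r+1)
        + d₃ * Real.exp (r * t) * p)) t p
      = -d₁ * Real.exp (-(r * (r - 1) * t) / 2) * (r+1) * ((r+1-1) * p ^ (r+1-1-1)) :=
    (h.congr_of_eventuallyEq hev).deriv
  rw [h2]; ring_nf

private lemma conv_dt2 (t p : ℝ) :
    dt (fun t p => -d₁ * Real.exp (-(r * (r - 1) * t) / 2) * p ^ (r+1)
        + d₃ * Real.exp (r * t) * p) t p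
      = -d₁ * (-(r*(r-1))/2 * Real.exp (-(r * (r - 1) * t) / 2)) * p ^ (r+1)
        + d₃ * (r * Real.exp (r * t)) * p := by
  exact ((((hE r t).const_mul (-d₁)).mul_const (p ^ (r+1))).add
    (((hER r t).const_mul d₃).mul_const p)).deriv

end Converse

/-- Classification of the coefficient functions in the contact symmetries of
Merton's HJB equation (for `r ≠ 0`): the system
(a) `p²∂_{pp}f₁ + 2∂_t f₁ = 0`, (b) `p²∂_{pp}f₂ + 2∂_t f₂ − 2r f₂ = 0`,
(c) `p²∂_p f₁ + p∂_p f₂ − f₂ = 0` holds (for `p > 0`) exactly for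
`f₁ = d₁ e^{−r(r−1)t/2} p^r − d₂/r`, `f₂ = −d₁ e^{−r(r−1)t/2} p^{r+1} + d₃ e^{rt} p`. -/
theorem merton_coefficient_classification (r : ℝ) (hr : r ≠ 0) :
    (∀ f₁ f₂ : ℝ → ℝ → ℝ,
      ContDiffOn ℝ 2 (fun z : ℝ × ℝ => f₁ z.1 z.2) (univ ×ˢ Ioi 0) →
      ContDiffOn ℝ 2 (fun z : ℝ × ℝ => f₂ z.1 z.2) (univ ×ˢ Ioi 0) →
      (∀ t : ℝ, ∀ p > (0:ℝ), p ^ 2 * dp (dp f₁) t p + 2 * dt f₁ t p = 0) →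
      (∀ t : ℝ, ∀ p > (0:ℝ),
        p ^ 2 * dp (dp f₂) t p + 2 * dt f₂ t p - 2 * r * f₂ t p = 0) →
      (∀ t : ℝ, ∀ p > (0:ℝ), p ^ 2 * dp f₁ t p + p * dp f₂ t p - f₂ t p = 0) →
      ∃ d₁ d₂ d₃ : ℝ, ∀ t : ℝ, ∀ p > (0:ℝ),
        f₁ t p = d₁ * Real.exp (-(r * (r - 1) * t) / 2) * p ^ r - d₂ / r
        ∧ f₂ t p = -d₁ * Real.exp (-(r * (r - 1) * t) / 2) * p ^ (r + 1)
            + d₃ * Real.exp (r * t) * p)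
    ∧ (∀ d₁ d₂ d₃ : ℝ,
        let f₁ : ℝ → ℝ → ℝ := fun t p =>
          d₁ * Real.exp (-(r * (r - 1) * t) / 2) * p ^ r - d₂ / r
        let f₂ : ℝ → ℝ → ℝ := fun t p =>
          -d₁ * Real.exp (-(r * (r - 1) * t) / 2) * p ^ (r + 1)
            + d₃ * Real.exp (r * t) * p
        (∀ t : ℝ, ∀ p > (0:ℝ), p ^ 2 * dp (dp f₁) t p + 2 * dt f₁ t p = 0)
        ∧ (∀ t : ℝ, ∀ p > (0:ℝ),
            p ^ 2 * dp (dp f₂) t p + 2 * dt f₂ t p - 2 * r * f₂ t p = 0)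
        ∧ (∀ t : ℝ, ∀ p > (0:ℝ),
            p ^ 2 * dp f₁ t p + p * dp f₂ t p - f₂ t p = 0)) := by
  constructor
  · intro f₁ f₂ h1 h2 ha hb hc
    -- Step 1: differentiate (c) in p
    have E1 : ∀ t : ℝ, ∀ p > (0:ℝ),
        2*p*dp f₁ t p + p^2*dp (dp f₁) t p + p*dp (dp f₂) t p = 0 := by
      intro t p hp
      have hφ := (((hasDerivAt_pow 2 p).mul (hdPP (t := t) h1 hp)).add
        ((hasDerivAt_id p).mul (hdPP (t := t) h2 hp))).sub (hdP (t := t) h2 hp)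
      have hz := deriv_eq_zero_of_eventually_zero hφ ?_
      · simp only [id_eq] at hz; push_cast at hz; linear_combination hz
      · filter_upwards [isOpen_Ioi.mem_nhds hp] with s hs
        exact hc t s hs
    -- Step 2: differentiate (c) in t
    have E2 : ∀ t : ℝ, ∀ p > (0:ℝ),
        p^2 * dt (dp f₁) t p + p * dt (dp f₂) t p - dt f₂ t p = 0 := by
      intro t p hp
      have hφ := (((hdTP (t := t) h1 hp).const_mul (p^2)).add
        ((hdTP (t := t) h2 hp).const_mul p)).sub (hdT (t := t) h2 hp)
      have hz := deriv_eq_zero_of_eventually_zero hφ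
        (Filter.Eventually.of_forall (fun s => hc s p hp))
      linear_combination hz
    -- (**)
    have Estar : ∀ t : ℝ, ∀ p > (0:ℝ),
        dt f₂ t p = r * f₂ t p + p^2 * dp f₁ t p - p * dt f₁ t p := by
      intro t p hp
      have e1 := E1 t p hp
      have ha' := ha t p hp
      have hb' := hb t p hp
      linear_combination (-(p:ℝ)/2) * e1 + (1/2) * hb' + (p/2) * ha'
    -- Step 3: differentiate (**) in p
    have E3 : ∀ t : ℝ, ∀ p > (0:ℝ),
        dt (dp f₂) t p - r * dp f₂ t p - (2*p*dp f₁ t p + p^2*dp (dp f₁) t p)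
          + (dt f₁ t p + p * dt (dp f₁) t p) = 0 := by
      intro t p hp
      have hφ := (((hdPT (t := t) h2 hp).sub ((hdP (t := t) h2 hp).const_mul r)).sub
        ((hasDerivAt_pow 2 p).mul (hdPP (t := t) h1 hp))).add
        ((hasDerivAt_id p).mul (hdPT (t := t) h1 hp))
      have hz := deriv_eq_zero_of_eventually_zero hφ ?_
      · rw [clairaut (t := t) h2 hp, clairaut (t := t) h1 hp] at hz
        simp only [id_eq] at hz; push_cast at hz; linear_combination hz
      · filter_upwards [isOpen_Ioi.mem_nhds hp] with s hs
        simp only [Pi.add_apply, Pi.sub_apply, Pi.mul_apply, id_eq]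
        linear_combination Estar t s hs
    -- Key relation
    have KeyR : ∀ t : ℝ, ∀ p > (0:ℝ), 2 * dt f₁ t p = (1-r) * p * dp f₁ t p := by
      intro t p hp
      have e3 := E3 t p hp
      have e2 := E2 t p hp
      have hc' := hc t p hp
      have ha' := ha t p hp
      have estar := Estar t p hp
      have key0 : p * (2*dt f₁ t p - (1-r)*p*dp f₁ t p) = 0 := by
        linear_combination p*e3 - e2 + r*hc' + p*ha' - estar
      rcases mul_eq_zero.1 key0 with h | h
      · exact absurd h hp.ne'
      · linarith
    have KeyODE : ∀ t : ℝ, ∀ p > (0:ℝ),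
        p * dp (dp f₁) t p = (r-1) * dp f₁ t p := by
      intro t p hp
      have ha' := ha t p hp
      have hk := KeyR t p hp
      have : p * (p * dp (dp f₁) t p - (r-1) * dp f₁ t p) = 0 := by
        linear_combination ha' - hk
      rcases mul_eq_zero.1 this with h | h
      · exact absurd h hp.ne'
      · linarith
    -- S1 : dp f₁ t p = dp f₁ t 1 * p^(r-1)
    have S1 : ∀ t : ℝ, ∀ p > (0:ℝ), dp f₁ t p = dp f₁ t 1 * p^(r-1) := by
      intro t p hp
      have hconst : ∀ x ∈ Ioi (0:ℝ), HasDerivAt (fun y => dp f₁ t y * y^(1-r)) 0 x := by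
        intro x hx
        have h := (hdPP (t := t) h1 hx).mul (hasDerivAt_rpow' hx (1-r))
        have hx1 : x * x^(1-r-1) = x^(1-r) := by
          nth_rewrite 1 [← Real.rpow_one x]
          rw [← Real.rpow_add hx]; congr 1; ring
        have hval : dp (dp f₁) t x * x^(1-r) + dp f₁ t x * ((1-r) * x^(1-r-1)) = 0 := by
          linear_combination x^(1-r-1) * (KeyODE t x hx) - dp (dp f₁) t x * hx1
        exact hval ▸ h
      have hcon := const_of_hasDerivAt_zero_Ioi hconst hp
      rw [Real.one_rpow, mul_one] at hcon
      have hprod : p^(1-r) * p^(r-1) = 1 := by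
        rw [← Real.rpow_add hp]; norm_num
      calc dp f₁ t p = dp f₁ t p * (p^(1-r) * p^(r-1)) := by rw [hprod, mul_one]
        _ = (dp f₁ t p * p^(1-r)) * p^(r-1) := by ring
        _ = dp f₁ t 1 * p^(r-1) := by rw [hcon]
    -- S2 : formula for f₁ at fixed t
    have S2 : ∀ t : ℝ, ∀ p > (0:ℝ),
        f₁ t p = dp f₁ t 1 * p^r / r + (f₁ t 1 - dp f₁ t 1 / r) := by
      intro t p hp
      have hconst : ∀ x ∈ Ioi (0:ℝ),
          HasDerivAt (fun y => f₁ t y - dp f₁ t 1 * y^r / r) 0 x := by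
        intro x hx
        have h := (hdP (t := t) h1 hx).sub
          (((hasDerivAt_rpow' hx r).const_mul (dp f₁ t 1)).div_const r)
        have hval : dp f₁ t x - dp f₁ t 1 * (r * x^(r-1)) / r = 0 := by
          rw [S1 t x hx]; field_simp; ring
        exact hval ▸ h
      have hcon := const_of_hasDerivAt_zero_Ioi hconst hp
      rw [Real.one_rpow, mul_one] at hcon
      linarith [hcon]
    -- S3 : formula for f₂ at fixed t
    have S3 : ∀ t : ℝ, ∀ p > (0:ℝ),
        f₂ t p = -(dp f₁ t 1) * p^(r+1) / r + (f₂ t 1 + dp f₁ t 1 / r) * p := by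
      intro t p hp
      have hconst : ∀ x ∈ Ioi (0:ℝ),
          HasDerivAt (fun y => f₂ t y / y + dp f₁ t 1 * y^r / r) 0 x := by
        intro x hx
        have hx0 : (x:ℝ) ≠ 0 := (mem_Ioi.1 hx).ne'
        have h := ((hdP (t := t) h2 hx).div (hasDerivAt_id x) hx0).add
          (((hasDerivAt_rpow' hx r).const_mul (dp f₁ t 1)).div_const r)
        have hxr : x * x^(r-1) = x^r := by
          nth_rewrite 1 [← Real.rpow_one x]
          rw [← Real.rpow_add hx]; congr 1; ring
        have hval : (dp f₂ t x * x - f₂ t x * 1) / x^2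
            + dp f₁ t 1 * (r * x^(r-1)) / r = 0 := by
          rw [div_add_div _ _ (pow_ne_zero 2 hx0) hr, div_eq_zero_iff]
          left
          have hS1 := S1 t x hx
          have hcx := hc t x hx
          linear_combination r * hcx - r * x^2 * hS1
        exact hval ▸ h
      have hcon := const_of_hasDerivAt_zero_Ioi hconst hp
      rw [Real.one_rpow, div_one] at hcon
      have hk : p^r * p = p^(r+1) := by
        nth_rewrite 2 [← Real.rpow_one p]
        rw [← Real.rpow_add hp]
      have hc2 : f₂ t p + dp f₁ t 1 * p ^ r / r * p = (f₂ t 1 + dp f₁ t 1 * 1 / r) * p := by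
        rw [← hcon]; field_simp
      linear_combination hc2 - (dp f₁ t 1 / r) * hk
    -- c satisfies a linear ODE
    have crel : ∀ t : ℝ, 2 * dt (dp f₁) t 1 = r * (1-r) * dp f₁ t 1 := by
      intro t
      have hform : ∀ p > (0:ℝ), r * dt f₁ t p
          = dt (dp f₁) t 1 * p^r + r * dt f₁ t 1 - dt (dp f₁) t 1 := by
        intro p hp
        have hfun : (fun s => f₁ s p)
            = (fun s => dp f₁ s 1 * p^r / r + (f₁ s 1 - dp f₁ s 1 / r)) :=
          funext fun s => S2 s p hp
        have hD : HasDerivAt (fun s => dp f₁ s 1 * p^r / r + (f₁ s 1 - dp f₁ s 1 / r))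
            (dt (dp f₁) t 1 * p^r / r + (dt f₁ t 1 - dt (dp f₁) t 1 / r)) t :=
          (((hdTP (t := t) h1 one_pos).mul_const _).div_const r).add
            ((hdT (t := t) h1 one_pos).sub ((hdTP (t := t) h1 one_pos).div_const r))
        rw [← hfun] at hD
        have := (hdT (t := t) h1 hp).unique hD
        field_simp at this
        linear_combination this
      have A' := hform 2 (by norm_num)
      have B := KeyR t 2 (by norm_num)
      have C := S1 t 2 (by norm_num)
      have D := KeyR t 1 one_pos
      have H2 : (2:ℝ) * (2:ℝ)^(r-1) = (2:ℝ)^r := by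
        nth_rewrite 1 [← Real.rpow_one (2:ℝ)]
        rw [← Real.rpow_add (by norm_num : (0:ℝ) < 2)]; congr 1; ring
      have key : ((2:ℝ)^r - 1) * (2*dt (dp f₁) t 1 - r*(1-r)*dp f₁ t 1) = 0 := by
        linear_combination (-2)*A' + r*B + 2*r*(1-r)*C
          + r*(1-r)*(dp f₁ t 1)*H2 - r*D
      rcases mul_eq_zero.1 key with h | h
      · exact absurd (by linarith : (2:ℝ)^r = 1) (two_rpow_ne_one hr)
      · linarith
    -- exponential solutions
    have cexp : ∀ t : ℝ, dp f₁ t 1 = dp f₁ 0 1 * Real.exp ((r*(1-r)/2) * t) := by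
      refine expODE (fun t => ?_)
      have h := hdTP h1 (t := t) one_pos
      have : dt (dp f₁) t 1 = r*(1-r)/2 * dp f₁ t 1 := by linarith [crel t]
      rwa [this] at h
    have aconst : ∀ t : ℝ, f₁ t 1 - dp f₁ t 1 / r = f₁ 0 1 - dp f₁ 0 1 / r := by
      have hg : ∀ t : ℝ, HasDerivAt (fun s => f₁ s 1 - dp f₁ s 1 / r) 0 t := by
        intro t
        have h := (hdT h1 (t := t) one_pos).sub ((hdTP h1 (t := t) one_pos).div_const r)
        have hval : dt f₁ t 1 - dt (dp f₁) t 1 / r = 0 := by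
          have h1' := KeyR t 1 one_pos
          have h2' := crel t
          field_simp
          linear_combination (r/2)*h1' - (1/2)*h2'
        rwa [hval] at h
      exact fun t => is_const_of_deriv_eq_zero
        (fun x => (hg x).differentiableAt) (fun x => (hg x).deriv) t 0
    have bexp : ∀ t : ℝ, f₂ t 1 + dp f₁ t 1 / r
        = (f₂ 0 1 + dp f₁ 0 1 / r) * Real.exp (r * t) := by
      refine expODE (fun t => ?_)
      have h := (hdT h2 (t := t) one_pos).add ((hdTP h1 (t := t) one_pos).div_const r)
      have hval : dt f₂ t 1 + dt (dp f₁) t 1 / r = r * (f₂ t 1 + dp f₁ t 1 / r) := by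
        have hes := Estar t 1 one_pos
        have hkr := KeyR t 1 one_pos
        have hcr := crel t
        field_simp
        linear_combination r*hes - (r/2)*hkr + (1/2)*hcr
      rwa [hval] at h
    refine ⟨dp f₁ 0 1 / r, -r * (f₁ 0 1 - dp f₁ 0 1 / r), f₂ 0 1 + dp f₁ 0 1 / r, ?_⟩
    intro t p hp
    have hexp : Real.exp (-(r * (r - 1) * t) / 2) = Real.exp ((r*(1-r)/2) * t) := by
      congr 1; ring
    constructor
    · rw [S2 t p hp, aconst t, cexp t, hexp]
      field_simp
      ring
    · rw [S3 t p hp, bexp t, cexp t, hexp]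
      field_simp
  · intro d₁ d₂ d₃
    refine ⟨?_, ?_, ?_⟩
    · intro t p hp
      rw [conv_dpdp1 d₁ d₂ t hp, conv_dt1 d₁ d₂ t p]
      have hk : p ^ 2 * p ^ (r-1-1) = p ^ r := by
        rw [← Real.rpow_natCast p 2, ← Real.rpow_add hp]
        congr 1; push_cast; ring
      linear_combination (d₁ * Real.exp (-(r*(r-1)*t)/2) * r * (r-1)) * hk
    · intro t p hp
      rw [conv_dpdp2 d₁ d₃ t hp, conv_dt2 d₁ d₃ t p]
      have hk : p ^ 2 * p ^ (r+1-1-1) = p ^ (r+1) := by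
        rw [← Real.rpow_natCast p 2, ← Real.rpow_add hp]
        congr 1; push_cast; ring
      linear_combination (-d₁ * Real.exp (-(r*(r-1)*t)/2) * (r+1) * r) * hk
    · intro t p hp
      rw [conv_dp1 d₁ d₂ t hp, conv_dp2 d₁ d₃ t hp]
      have hk1 : p ^ 2 * p ^ (r-1) = p ^ (r+1) := by
        rw [← Real.rpow_natCast p 2, ← Real.rpow_add hp]
        congr 1; push_cast; ring
      have hk2 : p * p ^ (r+1-1) = p ^ (r+1) := by
        nth_rewrite 1 [← Real.rpow_one p]
        rw [← Real.rpow_add hp]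
        congr 1; ring
      linear_combination (d₁ * Real.exp (-(r*(r-1)*t)/2) * r) * hk1
        + (-d₁ * Real.exp (-(r*(r-1)*t)/2) * (r+1)) * hk2

end Stmt7
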